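/- Let Ω ⊆ ℝⁿ be closed and convex, f : ℝⁿ → ℝ C¹, and h : Ω × Ω → ℝ satisfy: h(·, z) is convex with unique minimizer over Ω for every z, and ∇₁h(x,x)ᵀ(y−x) = ∇f(x)ᵀ(y−x) for all x, y ∈ Ω. If x ∈ Ω is not stationary for min_Ω f, then y := argmin_{z∈Ω} h(z, x) satisfies ∇f(x)ᵀ(y − x) ≤ h(y, x) − h(x, x) < 0. -/

import Mathlib

open scoped RealInnerProductSpace

theorem statement17 {n : ℕ} (Ω : Set (EuclideanSpace ℝ (Fin n)))
    (hΩc : IsClosed Ω) (hΩconv : Convex ℝ Ω) (hΩne : Ω.Nonempty)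
    (f : EuclideanSpace ℝ (Fin n) → ℝ) (hf : ContDiff ℝ 1 f)
    (h : EuclideanSpace ℝ (Fin n) → EuclideanSpace ℝ (Fin n) → ℝ)
    (hsmooth : ∀ z ∈ Ω, ContDiff ℝ 1 (fun u => h u z))
    (hconv : ∀ z ∈ Ω, ∀ x ∈ Ω, ∀ y ∈ Ω,
      h x z + ⟪gradient (fun u => h u z) x, y - x⟫ ≤ h y z)
    (hgrad : ∀ x ∈ Ω, ∀ y ∈ Ω,
      ⟪gradient (fun u => h u x) x, y - x⟫ = ⟪gradient f x, y - x⟫)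
    (huniq : ∀ z ∈ Ω, ∃! w, w ∈ Ω ∧ ∀ u ∈ Ω, h w z ≤ h u z)
    (x : EuclideanSpace ℝ (Fin n)) (hx : x ∈ Ω)
    (hnotstat : ¬ ∀ z ∈ Ω, 0 ≤ ⟪gradient f x, z - x⟫)
    (y : EuclideanSpace ℝ (Fin n)) (hyΩ : y ∈ Ω)
    (hymin : ∀ u ∈ Ω, h y x ≤ h u x) :
    ⟪gradient f x, y - x⟫ ≤ h y x - h x x ∧ h y x - h x x < 0 := by
  have h1 : ⟪gradient f x, y - x⟫ ≤ h y x - h x x := by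
    have := hconv x hx x hx y hyΩ
    rw [hgrad x hx y hyΩ] at this
    linarith
  refine ⟨h1, ?_⟩
  have hle : h y x ≤ h x x := hymin x hx
  rcases lt_or_eq_of_le hle with hlt | heq
  · linarith
  · exfalso
    have hxmin : ∀ u ∈ Ω, h x x ≤ h u x := fun u hu => heq ▸ hymin u hu
    apply hnotstat
    intro z hz
    rw [← hgrad x hx z hz]
    set G : EuclideanSpace ℝ (Fin n) → EuclideanSpace ℝ (Fin n) :=
      gradient (fun u => h u x) with hG
    have hGcont : Continuous G := by
      have hc : Continuous (fderiv ℝ (fun u => h u x)) :=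
        (hsmooth x hx).continuous_fderiv one_ne_zero
      exact ((InnerProductSpace.toDual ℝ
        (EuclideanSpace ℝ (Fin n))).symm.continuous).comp hc
    set φ : ℝ → ℝ := fun t => ⟪G (x + t • (z - x)), z - x⟫ with hφ
    have hφcont : Continuous φ := by
      apply Continuous.inner
      · exact hGcont.comp (by continuity)
      · exact continuous_const
    have hmem : ∀ t : ℝ, t ∈ Set.Ioc (0:ℝ) 1 → x + t • (z - x) ∈ Ω := by
      intro t ht
      have hc := hΩconv hx hz (by linarith [ht.1.le, ht.2] : (0:ℝ) ≤ 1 - t)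
        ht.1.le (by ring)
      convert hc using 1
      module
    have hφpos : ∀ t ∈ Set.Ioc (0:ℝ) 1, 0 ≤ φ t := by
      intro t ht
      set w := x + t • (z - x) with hw
      have hwΩ := hmem t ht
      have hc := hconv x hx w hwΩ x hx
      have hge : h x x ≤ h w x := hxmin w hwΩ
      have hxw : x - w = (-t) • (z - x) := by rw [hw]; module
      have hneg : ⟪G w, x - w⟫ ≤ 0 := by linarith
      rw [hxw, real_inner_smul_right] at hneg
      have hmul : 0 ≤ t * ⟪G w, z - x⟫ := by linarith
      exact nonneg_of_mul_nonneg_right hmul ht.1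
    have htend : Filter.Tendsto φ (nhdsWithin 0 (Set.Ioc (0:ℝ) 1)) (nhds (φ 0)) :=
      (hφcont.tendsto 0).mono_left nhdsWithin_le_nhds
    have hne : (nhdsWithin (0:ℝ) (Set.Ioc 0 1)).NeBot := by
      apply mem_closure_iff_nhdsWithin_neBot.mp
      rw [closure_Ioc (by norm_num : (0:ℝ) ≠ 1)]
      exact ⟨le_refl 0, by norm_num⟩
    have h0 : 0 ≤ φ 0 :=
      ge_of_tendsto htend (Filter.eventually_of_mem self_mem_nhdsWithin hφpos)
    simpa [hφ, hG] using h0
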